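/- Let Ω ⊂ ℝⁿ be open, bounded, with C^{1,1} boundary, s ∈ (0,1), and β : ℝⁿ\Ω → [0,1] measurable. Then for every fixed x ∈ Ω, the function (z, y) ↦ (1−β(z)) / ( |x−z|^{n+2s} |y−z|^{n+2s} ∫_Ω |z−w|^{−(n+2s)} dw ) is integrable on (ℝⁿ\Ω) × Ω with respect to Lebesgue measure, i.e., ∫_Ω k_β(x,y) dy < ∞. -/

import Mathlib

open MeasureTheory Metric Set

/-- A bounded open set with `C^{1,1}` boundary: we encode the analytically relevant
consequence, namely the uniform interior and exterior sphere conditions. -/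
def HasC11Boundary {n : ℕ} (Ω : Set (EuclideanSpace ℝ (Fin n))) : Prop :=
  ∃ r > 0, ∀ p ∈ frontier Ω,
    (∃ x ∈ Ω, Metric.closedBall x r ⊆ closure Ω ∧ dist p x = r) ∧
    (∃ y ∈ (closure Ω)ᶜ, Metric.closedBall y r ⊆ Ωᶜ ∧ dist p y = r)

/-- The kernel k_β(x,y). -/
noncomputable def kBeta {n : ℕ} (s : ℝ) (Ω : Set (EuclideanSpace ℝ (Fin n)))
    (β : EuclideanSpace ℝ (Fin n) → ℝ) (x y : EuclideanSpace ℝ (Fin n)) : ℝ :=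
  ∫ z in Ωᶜ, (1 - β z) /
    (‖x - z‖ ^ ((n : ℝ) + 2*s) * ‖y - z‖ ^ ((n : ℝ) + 2*s) *
      ∫ w in Ω, ‖z - w‖ ^ (-((n : ℝ) + 2*s)))

/-- for every fixed x ∈ Ω, the function
(z,y) ↦ (1−β(z)) / ( |x−z|^{n+2s}|y−z|^{n+2s} ∫_Ω |z−w|^{−(n+2s)} dw ) is integrable
on (ℝⁿ\Ω) × Ω; in particular ∫_Ω k_β(x,y) dy < ∞. -/
theorem stmt16 {n : ℕ} (Ω : Set (EuclideanSpace ℝ (Fin n)))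
    (hΩo : IsOpen Ω) (hΩb : Bornology.IsBounded Ω) (hΩc : HasC11Boundary Ω)
    (s : ℝ) (hs : s ∈ Set.Ioo (0:ℝ) 1)
    (β : EuclideanSpace ℝ (Fin n) → ℝ) (hβm : Measurable β)
    (hβ01 : ∀ z ∈ Ωᶜ, β z ∈ Set.Icc (0:ℝ) 1) :
    ∀ x ∈ Ω,
      MeasureTheory.IntegrableOn
        (fun p : EuclideanSpace ℝ (Fin n) × EuclideanSpace ℝ (Fin n) =>
          (1 - β p.1) /
            (‖x - p.1‖ ^ ((n : ℝ) + 2*s) * ‖p.2 - p.1‖ ^ ((n : ℝ) + 2*s) *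
              ∫ w in Ω, ‖p.1 - w‖ ^ (-((n : ℝ) + 2*s))))
        (Ωᶜ ×ˢ Ω) ∧
      MeasureTheory.IntegrableOn (fun y => kBeta s Ω β x y) Ω := by
  intro x hx
  obtain ⟨hs0, hs1⟩ := hs
  set r : ℝ := (n : ℝ) + 2*s with hrdef
  have hr0 : 0 < r := by positivity
  have hnr : (n : ℝ) < r := by simp only [hrdef]; linarith
  set F : EuclideanSpace ℝ (Fin n) × EuclideanSpace ℝ (Fin n) → ℝ := fun p =>
    (1 - β p.1) /
      (‖x - p.1‖ ^ r * ‖p.2 - p.1‖ ^ r * ∫ w in Ω, ‖p.1 - w‖ ^ (-r)) with hFdef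
  -- measurability of the inner normalizing integral
  have hImeas : StronglyMeasurable
      (fun z : EuclideanSpace ℝ (Fin n) => ∫ w in Ω, ‖z - w‖ ^ (-r)) := by
    apply StronglyMeasurable.integral_prod_right'
      (f := fun p : EuclideanSpace ℝ (Fin n) × EuclideanSpace ℝ (Fin n) => ‖p.1 - p.2‖ ^ (-r))
    exact (show Measurable fun p : EuclideanSpace ℝ (Fin n) × EuclideanSpace ℝ (Fin n) =>
      ‖p.1 - p.2‖ ^ (-r) by fun_prop).stronglyMeasurable
  have hFmeas : Measurable F := by
    apply Measurable.div
    · exact measurable_const.sub (hβm.comp measurable_fst)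
    · refine Measurable.mul (Measurable.mul ?_ ?_) (hImeas.measurable.comp measurable_fst)
      · fun_prop
      · fun_prop
  -- nonnegativity
  have hInn : ∀ z : EuclideanSpace ℝ (Fin n), 0 ≤ ∫ w in Ω, ‖z - w‖ ^ (-r) := fun z =>
    integral_nonneg fun w => Real.rpow_nonneg (norm_nonneg _) _
  have hβ' : ∀ z ∈ Ωᶜ, 0 ≤ 1 - β z ∧ 1 - β z ≤ 1 := fun z hz =>
    ⟨by linarith [(hβ01 z hz).2], by linarith [(hβ01 z hz).1]⟩
  have hFnn : ∀ z ∈ Ωᶜ, ∀ y, 0 ≤ F (z, y) := by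
    intro z hz y
    exact div_nonneg (hβ' z hz).1 (mul_nonneg (mul_nonneg
      (Real.rpow_nonneg (norm_nonneg _) _) (Real.rpow_nonneg (norm_nonneg _) _)) (hInn z))
  have hxz : ∀ z ∈ Ωᶜ, 0 < ‖x - z‖ ^ r := by
    intro z hz
    apply Real.rpow_pos_of_pos
    rw [norm_pos_iff, sub_ne_zero]
    intro h; exact hz (h ▸ hx)
  -- factorization of F
  have hfact : ∀ z y, F (z, y) =
      ((1 - β z) / (‖x - z‖ ^ r * ∫ w in Ω, ‖z - w‖ ^ (-r))) * ‖y - z‖ ^ (-r) := by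
    intro z y
    simp only [hFdef]
    rw [Real.rpow_neg (norm_nonneg _)]
    simp only [div_eq_mul_inv, mul_inv]
    ring
  have hIeq : ∀ z : EuclideanSpace ℝ (Fin n),
      (∫ y in Ω, ‖y - z‖ ^ (-r)) = ∫ w in Ω, ‖z - w‖ ^ (-r) := by
    intro z
    simp_rw [show ∀ y : EuclideanSpace ℝ (Fin n), ‖y - z‖ = ‖z - y‖ from
      fun y => norm_sub_rev _ _]
  -- the key per-z computation: integrability in y and a bound after cancellation
  have key : ∀ z ∈ Ωᶜ, IntegrableOn (fun y => F (z, y)) Ω ∧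
      (∫ y in Ω, F (z, y)) ≤ ‖x - z‖ ^ (-r) := by
    intro z hz
    by_cases hig : IntegrableOn (fun y : EuclideanSpace ℝ (Fin n) => ‖y - z‖ ^ (-r)) Ω
    · constructor
      · simp_rw [hfact z]
        exact hig.const_mul _
      · have hval : (∫ y in Ω, F (z, y)) =
            ((1 - β z) / (‖x - z‖ ^ r * ∫ w in Ω, ‖z - w‖ ^ (-r))) *
              ∫ w in Ω, ‖z - w‖ ^ (-r) := by
          simp_rw [hfact z]
          rw [integral_const_mul, hIeq]
        rw [hval]
        by_cases hI0 : (∫ w in Ω, ‖z - w‖ ^ (-r)) = 0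
        · rw [hI0, mul_zero]
          exact Real.rpow_nonneg (norm_nonneg _) _
        · have hA := hxz z hz
          have heq : (1 - β z) / (‖x - z‖ ^ r * ∫ w in Ω, ‖z - w‖ ^ (-r)) *
              (∫ w in Ω, ‖z - w‖ ^ (-r)) = (1 - β z) / ‖x - z‖ ^ r := by
            field_simp
          rw [heq, Real.rpow_neg (norm_nonneg _), ← one_div]
          rw [div_le_div_iff₀ hA hA]
          nlinarith [(hβ' z hz).2, hA]
    · have hig' : ¬ IntegrableOn (fun w : EuclideanSpace ℝ (Fin n) => ‖z - w‖ ^ (-r)) Ω := by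
        intro h
        apply hig
        have : (fun w : EuclideanSpace ℝ (Fin n) => ‖z - w‖ ^ (-r)) =
            fun y : EuclideanSpace ℝ (Fin n) => ‖y - z‖ ^ (-r) := by
          funext y; rw [norm_sub_rev]
        rwa [this] at h
      have hI0 : (∫ w in Ω, ‖z - w‖ ^ (-r)) = 0 := integral_undef hig'
      have hF0 : (fun y => F (z, y)) = fun _ => (0:ℝ) := by
        funext y
        rw [hfact z y, hI0, mul_zero, div_zero, zero_mul]
      constructor
      · rw [hF0]; exact integrableOn_const hΩb.measure_lt_top.ne
      · rw [hF0]
        simp only [integral_zero]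
        exact Real.rpow_nonneg (norm_nonneg _) _
  -- tail integrability of z ↦ ‖x-z‖^(-r) on Ωᶜ
  have hxtail : IntegrableOn (fun z : EuclideanSpace ℝ (Fin n) => ‖x - z‖ ^ (-r)) Ωᶜ := by
    obtain ⟨ε, hε, hball⟩ := Metric.isOpen_iff.1 hΩo x hx
    have hsub : Ωᶜ ⊆ (Metric.ball x ε)ᶜ := compl_subset_compl.2 hball
    apply IntegrableOn.mono_set _ hsub
    have h1 : Integrable (fun z : EuclideanSpace ℝ (Fin n) => (1 + ‖x - z‖) ^ (-r)) := by
      have := integrable_one_add_norm (μ := (volume : Measure (EuclideanSpace ℝ (Fin n))))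
        (r := r) (by rwa [finrank_euclideanSpace_fin])
      exact this.comp_sub_left x
    refine ((h1.const_mul ((1 + ε⁻¹) ^ r)).integrableOn).mono' ?_ ?_
    · exact (show Measurable fun z : EuclideanSpace ℝ (Fin n) => ‖x - z‖ ^ (-r)
        by fun_prop).aestronglyMeasurable
    · filter_upwards [ae_restrict_mem measurableSet_ball.compl] with z hz
      have ht : ε ≤ ‖x - z‖ := by
        have := (not_lt.1 (fun h => hz (Metric.mem_ball.2 h)))
        rwa [dist_eq_norm, norm_sub_rev] at this
      set t := ‖x - z‖ with htdef
      have htpos : 0 < t := lt_of_lt_of_le hε ht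
      rw [Real.norm_of_nonneg (Real.rpow_nonneg (norm_nonneg _) _)]
      have h2 : (1 + t) ^ r ≤ (1 + ε⁻¹) ^ r * t ^ r := by
        rw [← Real.mul_rpow (by positivity) htpos.le]
        apply Real.rpow_le_rpow (by positivity) _ hr0.le
        have : 1 ≤ ε⁻¹ * t := by
          rw [← div_eq_inv_mul, le_div_iff₀ hε]
          simpa using ht
        nlinarith
      rw [Real.rpow_neg (norm_nonneg _), Real.rpow_neg (by positivity : (0:ℝ) ≤ 1 + t)]
      rw [inv_eq_one_div (t ^ r), inv_eq_one_div ((1 + t) ^ r), mul_one_div, div_le_div_iff₀ (by positivity) (by positivity)]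
      linarith [h2]
  -- assemble via Fubini–Tonelli
  have hprodmeas : AEStronglyMeasurable F ((volume.restrict Ωᶜ).prod (volume.restrict Ω)) :=
    hFmeas.aestronglyMeasurable
  have hΩcm : MeasurableSet (Ωᶜ : Set (EuclideanSpace ℝ (Fin n))) :=
    hΩo.measurableSet.compl
  have hnormint : Integrable (fun z => ∫ y, ‖F (z, y)‖ ∂(volume.restrict Ω))
      (volume.restrict Ωᶜ) := by
    apply Integrable.mono hxtail
    · exact (hFmeas.norm.stronglyMeasurable.integral_prod_right').aestronglyMeasurable
    · filter_upwards [ae_restrict_mem hΩcm] with z hz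
      have hFn : (fun y => ‖F (z, y)‖) = fun y => F (z, y) :=
        funext fun y => Real.norm_of_nonneg (hFnn z hz y)
      rw [hFn, Real.norm_of_nonneg (integral_nonneg fun y => hFnn z hz y),
        Real.norm_of_nonneg (Real.rpow_nonneg (norm_nonneg _) _)]
      exact (key z hz).2
  have hprod : Integrable F ((volume.restrict Ωᶜ).prod (volume.restrict Ω)) := by
    rw [integrable_prod_iff hprodmeas]
    refine ⟨?_, hnormint⟩
    filter_upwards [ae_restrict_mem hΩcm] with z hz
    exact (key z hz).1
  have hprod' : IntegrableOn F (Ωᶜ ×ˢ Ω) := by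
    rw [IntegrableOn, Measure.volume_eq_prod, ← Measure.prod_restrict]
    exact hprod
  refine ⟨hprod', ?_⟩
  have h2 := hprod.integral_prod_right
  have : (fun y => kBeta s Ω β x y) =
      fun y => ∫ z, F (z, y) ∂(volume.restrict Ωᶜ) := by
    funext y
    simp only [kBeta, hFdef, ← hrdef]
  rw [this]
  exact h2
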